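/- Let ϕ : ℝ² → ℝ be smooth near 0 with ϕ₂ ≡ 0 and ϕ₃ ≡ 0, and suppose ϕ₄ ≢ 0 with 𝔫(ϕ₄) ≥ 3. Then h_lin(ϕ) > 2, and hence h(ϕ) > 2. -/

import Mathlib

open MeasureTheory Filter Metric Set
open scoped Topology ENNReal NNReal RealInnerProductSpace

noncomputable section

/-! ### Newton polygon machinery in two dimensions -/

/-- the partial derivative `∂₁ f` -/
def pd1 (f : ℝ × ℝ → ℝ) : ℝ × ℝ → ℝ := fun x => fderiv ℝ f x (1, 0)

/-- the partial derivative `∂₂ f` -/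
def pd2 (f : ℝ × ℝ → ℝ) : ℝ × ℝ → ℝ := fun x => fderiv ℝ f x (0, 1)

/-- the iterated partial derivative `∂₁^{α₁} ∂₂^{α₂} f` -/
def pD (α : ℕ × ℕ) (f : ℝ × ℝ → ℝ) : ℝ × ℝ → ℝ := pd1^[α.1] (pd2^[α.2] f)

/-- the Taylor support of `f` at the origin -/
def taylorSupport (f : ℝ × ℝ → ℝ) : Set (ℕ × ℕ) := {α : ℕ × ℕ | α ≠ 0 ∧ pD α f 0 ≠ 0}

/-- the Newton polygon of `f` at the origin -/
def newtonPolygon (f : ℝ × ℝ → ℝ) : Set (ℝ × ℝ) :=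
  convexHull ℝ (⋃ α ∈ taylorSupport f, {t : ℝ × ℝ | (α.1 : ℝ) ≤ t.1 ∧ (α.2 : ℝ) ≤ t.2})

/-- the Newton distance of `f` at the origin -/
def newtonDist (f : ℝ × ℝ → ℝ) : ℝ := sInf {t : ℝ | 0 < t ∧ (t, t) ∈ newtonPolygon f}

/-- a smooth local coordinate change at the origin of `ℝ²` -/
def IsLocalCoordChange (y : ℝ × ℝ → ℝ × ℝ) : Prop :=
  y 0 = 0 ∧ ∃ U V : Set (ℝ × ℝ), IsOpen U ∧ IsOpen V ∧ (0 : ℝ × ℝ) ∈ U ∧ (0 : ℝ × ℝ) ∈ V ∧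
    ContDiffOn ℝ (⊤ : ℕ∞) y U ∧ MapsTo y U V ∧ ∃ z : ℝ × ℝ → ℝ × ℝ,
      ContDiffOn ℝ (⊤ : ℕ∞) z V ∧ MapsTo z V U ∧
      (∀ x ∈ U, z (y x) = x) ∧ (∀ x ∈ V, y (z x) = x)

/-- the height `h(f)` of `f` -/
def height (f : ℝ × ℝ → ℝ) : ℝ :=
  sSup {d : ℝ | ∃ y : ℝ × ℝ → ℝ × ℝ, IsLocalCoordChange y ∧ d = newtonDist (f ∘ y)}

/-- the linear height `h_lin(f)` of `f` -/
def linHeight (f : ℝ × ℝ → ℝ) : ℝ :=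
  sSup {d : ℝ | ∃ L : (ℝ × ℝ) ≃ₗ[ℝ] ℝ × ℝ, d = newtonDist (f ∘ L)}

/-- the degree `j` homogeneous part of the Taylor series of `f` at the origin -/
def homPart (f : ℝ × ℝ → ℝ) (j : ℕ) : ℝ × ℝ → ℝ := fun x =>
  ∑ α ∈ Finset.HasAntidiagonal.antidiagonal j,
    (pD α f 0 / ((α.1.factorial : ℝ) * (α.2.factorial : ℝ))) * x.1 ^ α.1 * x.2 ^ α.2

/-- the order of vanishing of `P` restricted to the unit circle, at the point
`(cos θ, sin θ)` -/
def circVanish (P : ℝ × ℝ → ℝ) (θ : ℝ) : ℕ∞ :=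
  sSup {k : ℕ∞ | ∀ j : ℕ, (j : ℕ∞) < k →
    iteratedDeriv j (fun t => P (Real.cos t, Real.sin t)) θ = 0}

/-- `𝔫(P)`: the maximal order of vanishing of `P` along the unit circle -/
def nmax (P : ℝ × ℝ → ℝ) : ℕ∞ := ⨆ θ : ℝ, circVanish P θ

/-! ### `D`-type singularities -/

/-- the data of a normal form of a `D_{n+1}`-type singularity (`n = ⊤` means `D_∞`):
after the linear change of variables `L`, on an `ε`-ball around the origin,
`ϕ = b(x)·(x₂ - x₁^m ω(x₁))² + b₀(x₁)` with `b(0,0) = 0`, `∂₁b(0,0) ≠ 0`, `∂₂b(0,0) = 0`,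
`ω(0) ≠ 0`, and `b₀(x₁) = x₁ⁿ β(x₁)`, `β(0) ≠ 0` (case `n < ∞`), or `b₀` flat (case `n = ⊤`). -/
def DSingData (ϕ : ℝ × ℝ → ℝ) (m : ℕ) (n : ℕ∞) (L : (ℝ × ℝ) ≃ₗ[ℝ] ℝ × ℝ)
    (b : ℝ × ℝ → ℝ) (b0 ω : ℝ → ℝ) (ε : ℝ) : Prop :=
  0 < ε ∧ ContDiffOn ℝ (⊤ : ℕ∞) b (ball 0 ε) ∧ ContDiffOn ℝ (⊤ : ℕ∞) b0 (ball 0 ε) ∧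
    ContDiffOn ℝ (⊤ : ℕ∞) ω (ball 0 ε) ∧
    (∀ x ∈ ball (0 : ℝ × ℝ) ε, ϕ (L x) = b x * (x.2 - x.1 ^ m * ω x.1) ^ 2 + b0 x.1) ∧
    b 0 = 0 ∧ pd1 b 0 ≠ 0 ∧ pd2 b 0 = 0 ∧ ω 0 ≠ 0 ∧
    ((∃ n' : ℕ, n = (n' : ℕ∞) ∧ ∃ β : ℝ → ℝ, ContDiffOn ℝ (⊤ : ℕ∞) β (ball 0 ε) ∧ β 0 ≠ 0 ∧
        ∀ x₁ ∈ ball (0 : ℝ) ε, b0 x₁ = x₁ ^ n' * β x₁) ∨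
      (n = ⊤ ∧ ∀ j : ℕ, iteratedDeriv j b0 0 = 0))

/-- `ϕ` has a singularity of type `D_{n+1}` with parameters `(m, n)` -/
def DSing (ϕ : ℝ × ℝ → ℝ) (m : ℕ) (n : ℕ∞) : Prop :=
  2 ≤ m ∧ 3 ≤ n ∧ ∃ (L : (ℝ × ℝ) ≃ₗ[ℝ] ℝ × ℝ) (b : ℝ × ℝ → ℝ) (b0 ω : ℝ → ℝ) (ε : ℝ),
    DSingData ϕ m n L b b0 ω ε

/-- `ϕ` has a singularity of type `D_{n+1}` with parameters `(m, n)` and satisfies the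
`R`-condition: `b₀ ≡ 0` in the case `n = ∞`. -/
def DSingR (ϕ : ℝ × ℝ → ℝ) (m : ℕ) (n : ℕ∞) : Prop :=
  2 ≤ m ∧ 3 ≤ n ∧ ∃ (L : (ℝ × ℝ) ≃ₗ[ℝ] ℝ × ℝ) (b : ℝ × ℝ → ℝ) (b0 ω : ℝ → ℝ) (ε : ℝ),
    DSingData ϕ m n L b b0 ω ε ∧ (n = ⊤ → ∀ x₁ : ℝ, b0 x₁ = 0)

/-- the real value of `n ∈ ℕ∞`, with `∞ ↦ 0` (so that `c / enr ∞ = 0`, matching the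
convention that terms with `n` in the denominator are interpreted as `0` for `n = ∞`). -/
def enr (n : ℕ∞) : ℝ := (WithTop.untopD 0 n : ℕ)

/-! ### Convolution operators with oscillatory kernels -/

/-- Euclidean space `ℝ^N` -/
abbrev Ed (N : ℕ) : Type := EuclideanSpace ℝ (Fin N)

/-- an amplitude of order `-k`: smooth and homogeneous of degree `-k` for `‖ξ‖ ≥ 1` -/
def IsAmplitude {N : ℕ} (k : ℝ) (a : Ed N → ℂ) : Prop :=
  ContDiff ℝ (⊤ : ℕ∞) a ∧
    ∀ ξ : Ed N, 1 ≤ ‖ξ‖ → ∀ t : ℝ, 1 ≤ t → a (t • ξ) = ((t ^ (-k) : ℝ) : ℂ) * a ξ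

/-- the convolution operator `M_k u = F⁻¹(e^{iφ} a (F u))` on Schwartz functions -/
def Mop {N : ℕ} (φ : Ed N → ℝ) (a : Ed N → ℂ) (u : SchwartzMap (Ed N) ℂ) : Ed N → ℂ :=
  VectorFourier.fourierIntegral Real.fourierChar volume (-innerₗ (Ed N))
    (fun ξ => Complex.exp (Complex.I * (φ ξ : ℂ)) * a ξ *
      VectorFourier.fourierIntegral Real.fourierChar volume (innerₗ (Ed N)) (fun x => u x) ξ)

/-- the operator `M_k` (with phase `φ` and amplitude `a`) is `L^p → L^q` bounded -/
def IsLpBdd {N : ℕ} (φ : Ed N → ℝ) (a : Ed N → ℂ) (p q : ℝ≥0∞) : Prop :=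
  ∃ C : ℝ≥0, ∀ u : SchwartzMap (Ed N) ℂ,
    eLpNorm (Mop φ a u) q volume ≤ (C : ℝ≥0∞) * eLpNorm (fun x => u x) p volume

/-- `Γ` is a conic neighborhood of `v` (contained in `ℝ^N ∖ {0}`) -/
def IsConicNbhd {N : ℕ} (Γ : Set (Ed N)) (v : Ed N) : Prop :=
  IsOpen Γ ∧ v ∈ Γ ∧ (0 : Ed N) ∉ Γ ∧ ∀ ξ ∈ Γ, ∀ t : ℝ, 0 < t → t • ξ ∈ Γ

/-- the local exponent `k_p(v)`, for the pair of conjugate exponents `(p, q)` -/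
def kpLoc {N : ℕ} (φ : Ed N → ℝ) (v : Ed N) (p q : ℝ≥0∞) : ℝ :=
  sInf {k : ℝ | 0 < k ∧ ∃ Γ : Set (Ed N), IsConicNbhd Γ v ∧
    ∀ a : Ed N → ℂ, IsAmplitude k a → Function.support a ⊆ Γ → IsLpBdd φ a p q}

/-- the global exponent `k_p(Σ)`, for the pair of conjugate exponents `(p, q)` -/
def kpGlob {N : ℕ} (φ : Ed N → ℝ) (p q : ℝ≥0∞) : ℝ :=
  sInf {k : ℝ | 0 < k ∧ ∀ a : Ed N → ℂ, IsAmplitude k a → IsLpBdd φ a p q}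

/-- `φ` is smooth away from the origin, positive away from the origin, and positively
homogeneous of degree one -/
def PhiHyp {N : ℕ} (φ : Ed N → ℝ) : Prop :=
  ContDiffOn ℝ (⊤ : ℕ∞) φ {(0 : Ed N)}ᶜ ∧ (∀ ξ : Ed N, ξ ≠ 0 → 0 < φ ξ) ∧
    ∀ t : ℝ, 0 < t → ∀ ξ : Ed N, ξ ≠ 0 → φ (t • ξ) = t * φ ξ

/-- the point `v = (0, 0, 1) ∈ ℝ³` -/
def vpt : Ed 3 := (WithLp.equiv 2 (Fin 3 → ℝ)).symm ![0, 0, 1]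

/-- the point `(x₁, x₂, 1 + ϕ(x₁, x₂)) ∈ ℝ³` -/
def graphPt (ϕ : ℝ × ℝ → ℝ) (x : ℝ × ℝ) : Ed 3 :=
  (WithLp.equiv 2 (Fin 3 → ℝ)).symm ![x.1, x.2, 1 + ϕ x]

/-- near `v = (0,0,1)`, the surface `Σ = {φ = 1}` is the graph of `1 + ϕ` over a
neighborhood `U` of the origin, where `ϕ` is smooth with `ϕ(0,0) = 0`, `∇ϕ(0,0) = 0` -/
def GraphAt (φ : Ed 3 → ℝ) (ϕ : ℝ × ℝ → ℝ) : Prop :=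
  ∃ U ∈ 𝓝 (0 : ℝ × ℝ), ContDiffOn ℝ (⊤ : ℕ∞) ϕ U ∧ ϕ 0 = 0 ∧ fderiv ℝ ϕ 0 = 0 ∧
    ∃ W : Set (Ed 3), IsOpen W ∧ vpt ∈ W ∧ {ξ ∈ W | φ ξ = 1} = graphPt ϕ '' U

/-- the height `h(Σ)` of the surface `Σ = {φ = 1}`: the supremum over points `v ∈ Σ` of the
heights of graph functions of `Σ` at `v`, obtained after a linear change of variables of `ℝ³`
moving `v` to `(0,0,1)` -/
def hSurf (φ : Ed 3 → ℝ) : ℝ :=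
  sSup {h : ℝ | ∃ v : Ed 3, φ v = 1 ∧ ∃ A : Ed 3 ≃ₗ[ℝ] Ed 3, A v = vpt ∧
    ∃ ϕ : ℝ × ℝ → ℝ, GraphAt (φ ∘ A.symm) ϕ ∧ h = height ϕ}

/-- the point `(x, 1 + ϕ(x)) ∈ ℝ^{d+1}` for `x ∈ ℝ^d` -/
def graphPtN {d : ℕ} (ϕ : Ed d → ℝ) (x : Ed d) : Ed (d + 1) :=
  (WithLp.equiv 2 (Fin (d + 1) → ℝ)).symm
    (Fin.snoc ((WithLp.equiv 2 (Fin d → ℝ)) x) (1 + ϕ x))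

/-- the point `v = (0, …, 0, 1) ∈ ℝ^{d+1}` -/
def vptN (d : ℕ) : Ed (d + 1) :=
  (WithLp.equiv 2 (Fin (d + 1) → ℝ)).symm (Fin.snoc (fun _ : Fin d => (0 : ℝ)) 1)

/-- the oscillatory integral `I(λ, s) = ∫ e^{iλ(ϕ(x) + s·x)} g(x) dx` over `ℝ^d` -/
def oscI {d : ℕ} (ϕ : Ed d → ℝ) (g : Ed d → ℂ) (l : ℝ) (s : Ed d) : ℂ :=
  ∫ x : Ed d, Complex.exp (Complex.I * ((l * (ϕ x + ⟪s, x⟫) : ℝ) : ℂ)) * g x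

/-- the oscillatory integral `I(λ, s)` in two dimensions, with `ℝ²` realised as `ℝ × ℝ` -/
def oscI2 (ϕ : ℝ × ℝ → ℝ) (g : ℝ × ℝ → ℂ) (l : ℝ) (s : ℝ × ℝ) : ℂ :=
  ∫ x : ℝ × ℝ, Complex.exp (Complex.I * ((l * (ϕ x + s.1 * x.1 + s.2 * x.2) : ℝ) : ℂ)) * g x

variable {U : Set E2} {f g : E2 → ℝ} {x : E2}

abbrev E2 := ℝ × ℝ

def ee1 : E2 := (1, 0)

def ee2 : E2 := (0, 1)

def dv (v : E2) (f : E2 → ℝ) : E2 → ℝ := fun x => fderiv ℝ f x v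

lemma pd1_eq : pd1 = dv ee1 := rfl

lemma pd2_eq : pd2 = dv ee2 := rfl

lemma cdo_diffAt (hU : IsOpen U) (hf : ContDiffOn ℝ (⊤ : ℕ∞) f U) (hx : x ∈ U) :
    DifferentiableAt ℝ f x :=
  (hf.differentiableOn (by simp)).differentiableAt (hU.mem_nhds hx)

lemma smooth_dv (hU : IsOpen U) (hf : ContDiffOn ℝ (⊤ : ℕ∞) f U) (v : E2) :
    ContDiffOn ℝ (⊤ : ℕ∞) (dv v f) U := by
  have h1 : ContDiffOn ℝ (⊤ : ℕ∞) (fderiv ℝ f) U := by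
    apply hf.fderiv_of_isOpen hU
    exact_mod_cast le_refl _
  exact h1.clm_apply contDiffOn_const

lemma dv_congr (hU : IsOpen U) (h : ∀ y ∈ U, f y = g y) (hx : x ∈ U) (v : E2) :
    dv v f x = dv v g x := by
  have hev : f =ᶠ[nhds x] g := Filter.eventuallyEq_of_mem (hU.mem_nhds hx) h
  simp only [dv, hev.fderiv_eq]

lemma dv_basis (v : E2) (f : E2 → ℝ) (x : E2) :
    dv v f x = v.1 * dv ee1 f x + v.2 * dv ee2 f x := by
  have hv : v = v.1 • ee1 + v.2 • ee2 := by
    ext <;> simp [ee1, ee2]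
  simp only [dv]
  conv_lhs => rw [hv]
  rw [map_add, _root_.map_smul, _root_.map_smul]
  simp [smul_eq_mul]

lemma dv_add {v : E2} (hf : DifferentiableAt ℝ f x) (hg : DifferentiableAt ℝ g x) :
    dv v (fun y => f y + g y) x = dv v f x + dv v g x := by
  simp only [dv]
  rw [fderiv_fun_add hf hg]
  simp

lemma dv_cmul {v : E2} (c : ℝ) (hf : DifferentiableAt ℝ f x) :
    dv v (fun y => c * f y) x = c * dv v f x := by
  simp only [dv]
  rw [fderiv_const_mul hf]
  simp

lemma dv_sub {v : E2} (hf : DifferentiableAt ℝ f x) (hg : DifferentiableAt ℝ g x) :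
    dv v (fun y => f y - g y) x = dv v f x - dv v g x := by
  simp only [dv]
  rw [fderiv_fun_sub hf hg]
  simp

lemma dv_comp (L : E2 ≃ₗ[ℝ] E2) (hf : DifferentiableAt ℝ f (L x)) (v : E2) :
    dv v (f ∘ ⇑L) x = dv (L v) f (L x) := by
  have hL : HasFDerivAt (⇑L) ((L.toContinuousLinearEquiv : E2 →L[ℝ] E2)) x := by
    simpa using L.toContinuousLinearEquiv.hasFDerivAt
  have hc := (hf.hasFDerivAt.comp x hL).fderiv
  simp only [dv, hc, ContinuousLinearMap.coe_comp', Function.comp_apply]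
  congr 1

lemma dv_swap (hU : IsOpen U) (hf : ContDiffOn ℝ (⊤ : ℕ∞) f U) (hx : x ∈ U) (v w : E2) :
    dv v (dv w f) x = dv w (dv v f) x := by
  have hev : ∀ᶠ y in nhds x, HasFDerivAt f (fderiv ℝ f y) y := by
    filter_upwards [hU.eventually_mem hx] with y hy
    exact (cdo_diffAt hU hf hy).hasFDerivAt
  have hf1 : ContDiffOn ℝ (⊤ : ℕ∞) (fderiv ℝ f) U := by
    apply hf.fderiv_of_isOpen hU
    exact_mod_cast le_refl _
  have hdf : DifferentiableAt ℝ (fderiv ℝ f) x :=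
    ((hf1.differentiableOn (by simp)).differentiableAt (hU.mem_nhds hx))
  have hsym := second_derivative_symmetric_of_eventually hev hdf.hasFDerivAt v w
  have key : ∀ a : E2, dv a (dv w f) x = (fderiv ℝ (fderiv ℝ f) x a) w := by
    intro a
    rw [show dv a (dv w f) x = (fderiv ℝ (fun y => (fderiv ℝ f y) w) x) a from rfl]
    rw [fderiv_clm_apply hdf (differentiableAt_const w)]
    simp
  have key2 : ∀ a : E2, dv a (dv v f) x = (fderiv ℝ (fderiv ℝ f) x a) v := by
    intro a
    rw [show dv a (dv v f) x = (fderiv ℝ (fun y => (fderiv ℝ f y) v) x) a from rfl]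
    rw [fderiv_clm_apply hdf (differentiableAt_const v)]
    simp
  rw [key v, key2 w]
  exact hsym

lemma smooth_dv_iter (hU : IsOpen U) (v : E2) (i : ℕ) (hf : ContDiffOn ℝ (⊤ : ℕ∞) f U) :
    ContDiffOn ℝ (⊤ : ℕ∞) ((dv v)^[i] f) U := by
  induction i generalizing f with
  | zero => simpa
  | succ i ih => rw [Function.iterate_succ_apply]; exact ih (smooth_dv hU hf v)

lemma smooth_pD (hU : IsOpen U) (hf : ContDiffOn ℝ (⊤ : ℕ∞) f U) (α : ℕ × ℕ) :
    ContDiffOn ℝ (⊤ : ℕ∞) (pD α f) U := by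
  rw [show pD α f = (dv ee1)^[α.1] ((dv ee2)^[α.2] f) from rfl]
  exact smooth_dv_iter hU ee1 α.1 (smooth_dv_iter hU ee2 α.2 hf)

lemma dv_e2_pd1_iter (hU : IsOpen U) (hg : ContDiffOn ℝ (⊤ : ℕ∞) g U) (i : ℕ) :
    ∀ x ∈ U, dv ee2 ((dv ee1)^[i] g) x = (dv ee1)^[i] (dv ee2 g) x := by
  induction i with
  | zero => intro x _; rfl
  | succ i ih =>
    intro x hx
    rw [Function.iterate_succ_apply' (dv ee1)]
    rw [dv_swap hU (smooth_dv_iter hU ee1 i hg) hx ee2 ee1]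
    rw [dv_congr hU (fun y hy => ih y hy) hx ee1]
    rw [Function.iterate_succ_apply' (dv ee1)]

lemma dv_pD (hU : IsOpen U) (hf : ContDiffOn ℝ (⊤ : ℕ∞) f U) (hx : x ∈ U) (v : E2) (i j : ℕ) :
    dv v (pD (i, j) f) x = v.1 * pD (i + 1, j) f x + v.2 * pD (i, j + 1) f x := by
  rw [dv_basis]
  congr 1
  · congr 1
    rw [show pD (i, j) f = (dv ee1)^[i] ((dv ee2)^[j] f) from rfl]
    rw [← Function.iterate_succ_apply' (dv ee1)]
    rfl
  · congr 1
    rw [show pD (i, j) f = (dv ee1)^[i] ((dv ee2)^[j] f) from rfl]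
    rw [dv_e2_pd1_iter hU (smooth_dv_iter hU ee2 j hf) i x hx]
    rw [show dv ee2 ((dv ee2)^[j] f) = (dv ee2)^[j+1] f from
      (Function.iterate_succ_apply' (dv ee2) j f).symm]
    rfl

lemma pD00 : pD (0, 0) f = f := rfl

lemma ddE1 (hU : IsOpen U) (hf : ContDiffOn ℝ (⊤ : ℕ∞) f U) (hx : x ∈ U) (v : E2) :
    dv v f x = v.1 * pD (1, 0) f x + v.2 * pD (0, 1) f x := by
  have h := dv_pD hU hf hx v 0 0
  rwa [pD00] at h

lemma dv_comb2 {g0 g1 : E2 → ℝ} {c0 c1 : ℝ} {v : E2}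
    (h0 : DifferentiableAt ℝ g0 x) (h1 : DifferentiableAt ℝ g1 x) :
    dv v (fun y => c0 * g0 y + c1 * g1 y) x = c0 * dv v g0 x + c1 * dv v g1 x := by
  rw [dv_add (h0.const_mul c0) (h1.const_mul c1), dv_cmul c0 h0, dv_cmul c1 h1]

lemma dv_comb3 {g0 g1 g2 : E2 → ℝ} {c0 c1 c2 : ℝ} {v : E2}
    (h0 : DifferentiableAt ℝ g0 x) (h1 : DifferentiableAt ℝ g1 x)
    (h2 : DifferentiableAt ℝ g2 x) :
    dv v (fun y => c0 * g0 y + c1 * g1 y + c2 * g2 y) x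
      = c0 * dv v g0 x + c1 * dv v g1 x + c2 * dv v g2 x := by
  rw [dv_add ((h0.const_mul c0).fun_add (h1.const_mul c1)) (h2.const_mul c2),
    dv_comb2 h0 h1, dv_cmul c2 h2]

lemma dv_comb4 {g0 g1 g2 g3 : E2 → ℝ} {c0 c1 c2 c3 : ℝ} {v : E2}
    (h0 : DifferentiableAt ℝ g0 x) (h1 : DifferentiableAt ℝ g1 x)
    (h2 : DifferentiableAt ℝ g2 x) (h3 : DifferentiableAt ℝ g3 x) :
    dv v (fun y => c0 * g0 y + c1 * g1 y + c2 * g2 y + c3 * g3 y) x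
      = c0 * dv v g0 x + c1 * dv v g1 x + c2 * dv v g2 x + c3 * dv v g3 x := by
  rw [dv_add (((h0.const_mul c0).fun_add (h1.const_mul c1)).fun_add (h2.const_mul c2)) (h3.const_mul c3),
    dv_comb3 h0 h1 h2, dv_cmul c3 h3]

lemma ddE2 (hU : IsOpen U) (hf : ContDiffOn ℝ (⊤ : ℕ∞) f U) :
    ∀ x ∈ U, ∀ v w : E2, dv v (dv w f) x
      = (v.1 * w.1) * pD (2, 0) f x + (v.1 * w.2 + v.2 * w.1) * pD (1, 1) f x
        + (v.2 * w.2) * pD (0, 2) f x := by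
  intro x hx v w
  have h1 : ∀ y ∈ U, dv w f y = w.1 * pD (1, 0) f y + w.2 * pD (0, 1) f y :=
    fun y hy => ddE1 hU hf hy w
  rw [dv_congr hU h1 hx v,
    dv_comb2 (cdo_diffAt hU (smooth_pD hU hf (1, 0)) hx) (cdo_diffAt hU (smooth_pD hU hf (0, 1)) hx),
    dv_pD hU hf hx v 1 0, dv_pD hU hf hx v 0 1]
  ring

lemma ddE3 (hU : IsOpen U) (hf : ContDiffOn ℝ (⊤ : ℕ∞) f U) :
    ∀ x ∈ U, ∀ v w u : E2, dv v (dv w (dv u f)) x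
      = (v.1 * w.1 * u.1) * pD (3, 0) f x
        + (v.1 * w.1 * u.2 + v.1 * w.2 * u.1 + v.2 * w.1 * u.1) * pD (2, 1) f x
        + (v.1 * w.2 * u.2 + v.2 * w.1 * u.2 + v.2 * w.2 * u.1) * pD (1, 2) f x
        + (v.2 * w.2 * u.2) * pD (0, 3) f x := by
  intro x hx v w u
  have h1 : ∀ y ∈ U, dv w (dv u f) y
      = (w.1 * u.1) * pD (2, 0) f y + (w.1 * u.2 + w.2 * u.1) * pD (1, 1) f y
        + (w.2 * u.2) * pD (0, 2) f y := fun y hy => ddE2 hU hf y hy w u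
  rw [dv_congr hU h1 hx v,
    dv_comb3 (cdo_diffAt hU (smooth_pD hU hf (2, 0)) hx)
      (cdo_diffAt hU (smooth_pD hU hf (1, 1)) hx)
      (cdo_diffAt hU (smooth_pD hU hf (0, 2)) hx),
    dv_pD hU hf hx v 2 0, dv_pD hU hf hx v 1 1, dv_pD hU hf hx v 0 2]
  ring

lemma ddE4 (hU : IsOpen U) (hf : ContDiffOn ℝ (⊤ : ℕ∞) f U) :
    ∀ x ∈ U, ∀ v w u q : E2, dv v (dv w (dv u (dv q f))) x
      = (v.1 * w.1 * u.1 * q.1) * pD (4, 0) f x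
        + (v.1 * w.1 * u.1 * q.2 + v.1 * w.1 * u.2 * q.1 + v.1 * w.2 * u.1 * q.1
            + v.2 * w.1 * u.1 * q.1) * pD (3, 1) f x
        + (v.1 * w.1 * u.2 * q.2 + v.1 * w.2 * u.1 * q.2 + v.2 * w.1 * u.1 * q.2
            + v.1 * w.2 * u.2 * q.1 + v.2 * w.1 * u.2 * q.1 + v.2 * w.2 * u.1 * q.1)
            * pD (2, 2) f x
        + (v.1 * w.2 * u.2 * q.2 + v.2 * w.1 * u.2 * q.2 + v.2 * w.2 * u.1 * q.2
            + v.2 * w.2 * u.2 * q.1) * pD (1, 3) f x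
        + (v.2 * w.2 * u.2 * q.2) * pD (0, 4) f x := by
  intro x hx v w u q
  have h1 : ∀ y ∈ U, dv w (dv u (dv q f)) y
      = (w.1 * u.1 * q.1) * pD (3, 0) f y
        + (w.1 * u.1 * q.2 + w.1 * u.2 * q.1 + w.2 * u.1 * q.1) * pD (2, 1) f y
        + (w.1 * u.2 * q.2 + w.2 * u.1 * q.2 + w.2 * u.2 * q.1) * pD (1, 2) f y
        + (w.2 * u.2 * q.2) * pD (0, 3) f y := fun y hy => ddE3 hU hf y hy w u q
  rw [dv_congr hU h1 hx v,
    dv_comb4 (cdo_diffAt hU (smooth_pD hU hf (3, 0)) hx)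
      (cdo_diffAt hU (smooth_pD hU hf (2, 1)) hx)
      (cdo_diffAt hU (smooth_pD hU hf (1, 2)) hx)
      (cdo_diffAt hU (smooth_pD hU hf (0, 3)) hx),
    dv_pD hU hf hx v 3 0, dv_pD hU hf hx v 2 1, dv_pD hU hf hx v 1 2, dv_pD hU hf hx v 0 3]
  ring

lemma contL (L : E2 ≃ₗ[ℝ] E2) : Continuous ⇑L := by
  have := L.toContinuousLinearEquiv.continuous
  simpa using this

lemma comp1 (L : E2 ≃ₗ[ℝ] E2) (hU : IsOpen U) (hf : ContDiffOn ℝ (⊤ : ℕ∞) f U) :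
    ∀ x, L x ∈ U → ∀ v : E2, dv v (f ∘ ⇑L) x = dv (L v) f (L x) :=
  fun x hx v => dv_comp L (cdo_diffAt hU hf hx) v

lemma comp2 (L : E2 ≃ₗ[ℝ] E2) (hU : IsOpen U) (hf : ContDiffOn ℝ (⊤ : ℕ∞) f U) :
    ∀ x, L x ∈ U → ∀ v w : E2,
      dv v (dv w (f ∘ ⇑L)) x = dv (L v) (dv (L w) f) (L x) := by
  intro x hx v w
  have hpre : IsOpen (⇑L ⁻¹' U) := hU.preimage (contL L)
  have h1 : ∀ y ∈ ⇑L ⁻¹' U, dv w (f ∘ ⇑L) y = ((dv (L w) f) ∘ ⇑L) y :=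
    fun y hy => comp1 L hU hf y hy w
  rw [dv_congr hpre h1 hx v]
  exact dv_comp L (cdo_diffAt hU (smooth_dv hU hf (L w)) hx) v

lemma comp3 (L : E2 ≃ₗ[ℝ] E2) (hU : IsOpen U) (hf : ContDiffOn ℝ (⊤ : ℕ∞) f U) :
    ∀ x, L x ∈ U → ∀ v w u : E2,
      dv v (dv w (dv u (f ∘ ⇑L))) x = dv (L v) (dv (L w) (dv (L u) f)) (L x) := by
  intro x hx v w u
  have hpre : IsOpen (⇑L ⁻¹' U) := hU.preimage (contL L)
  have h1 : ∀ y ∈ ⇑L ⁻¹' U, dv w (dv u (f ∘ ⇑L)) y = ((dv (L w) (dv (L u) f)) ∘ ⇑L) y :=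
    fun y hy => comp2 L hU hf y hy w u
  rw [dv_congr hpre h1 hx v]
  exact dv_comp L (cdo_diffAt hU (smooth_dv hU (smooth_dv hU hf (L u)) (L w)) hx) v

lemma comp4 (L : E2 ≃ₗ[ℝ] E2) (hU : IsOpen U) (hf : ContDiffOn ℝ (⊤ : ℕ∞) f U) :
    ∀ x, L x ∈ U → ∀ v w u q : E2,
      dv v (dv w (dv u (dv q (f ∘ ⇑L)))) x
        = dv (L v) (dv (L w) (dv (L u) (dv (L q) f))) (L x) := by
  intro x hx v w u q
  have hpre : IsOpen (⇑L ⁻¹' U) := hU.preimage (contL L)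
  have h1 : ∀ y ∈ ⇑L ⁻¹' U, dv w (dv u (dv q (f ∘ ⇑L))) y
      = ((dv (L w) (dv (L u) (dv (L q) f))) ∘ ⇑L) y :=
    fun y hy => comp3 L hU hf y hy w u q
  rw [dv_congr hpre h1 hx v]
  exact dv_comp L
    (cdo_diffAt hU (smooth_dv hU (smooth_dv hU (smooth_dv hU hf (L q)) (L u)) (L w)) hx) v

lemma dv_e1_pD (i j : ℕ) (f : E2 → ℝ) : dv ee1 (pD (i, j) f) = pD (i + 1, j) f := by
  rw [show pD (i, j) f = (dv ee1)^[i] ((dv ee2)^[j] f) from rfl,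
    show pD (i + 1, j) f = (dv ee1)^[i+1] ((dv ee2)^[j] f) from rfl,
    Function.iterate_succ_apply' (dv ee1)]

lemma dv_e2_pD (hU : IsOpen U) (hf : ContDiffOn ℝ (⊤ : ℕ∞) f U) (i j : ℕ) :
    ∀ y ∈ U, dv ee2 (pD (i, j) f) y = pD (i, j + 1) f y := by
  intro y hy
  rw [show pD (i, j) f = (dv ee1)^[i] ((dv ee2)^[j] f) from rfl]
  rw [dv_e2_pd1_iter hU (smooth_dv_iter hU ee2 j hf) i y hy]
  rw [show dv ee2 ((dv ee2)^[j] f) = (dv ee2)^[j+1] f from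
    (Function.iterate_succ_apply' (dv ee2) j f).symm]
  rfl

lemma mvt_step (hU : IsOpen U) {g : E2 → ℝ} (hg : ContDiffOn ℝ (⊤ : ℕ∞) g U) {δ K : ℝ}
    (hK : 0 ≤ K) (hδU : closedBall (0 : E2) δ ⊆ U) (hg0 : g 0 = 0) (j : ℕ)
    (hb : ∀ y ∈ closedBall (0 : E2) δ, |dv ee1 g y| ≤ K * ‖y‖ ^ j ∧ |dv ee2 g y| ≤ K * ‖y‖ ^ j) :
    ∀ x ∈ closedBall (0 : E2) δ, |g x| ≤ 2 * K * ‖x‖ ^ (j + 1) := by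
  intro x hx
  have hxδ : ‖x‖ ≤ δ := by simpa [dist_zero_right] using hx
  have hsub : closedBall (0 : E2) ‖x‖ ⊆ closedBall 0 δ := closedBall_subset_closedBall hxδ
  have hC : ∀ y ∈ closedBall (0 : E2) ‖x‖, ‖fderiv ℝ g y‖ ≤ 2 * K * ‖x‖ ^ j := by
    intro y hy
    have hy' : ‖y‖ ≤ ‖x‖ := by simpa [dist_zero_right] using hy
    apply ContinuousLinearMap.opNorm_le_bound _ (by positivity)
    intro v
    have h1 := (hb y (hsub hy)).1
    have h2 := (hb y (hsub hy)).2
    have hyx : ‖y‖ ^ j ≤ ‖x‖ ^ j := pow_le_pow_left₀ (norm_nonneg _) hy' j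
    have e : fderiv ℝ g y v = v.1 * dv ee1 g y + v.2 * dv ee2 g y := dv_basis v g y
    rw [e]
    have hv1 : |v.1| ≤ ‖v‖ := by
      have := norm_fst_le v; simpa using this
    have hv2 : |v.2| ≤ ‖v‖ := by
      have := norm_snd_le v; simpa using this
    calc ‖v.1 * dv ee1 g y + v.2 * dv ee2 g y‖
        ≤ |v.1 * dv ee1 g y| + |v.2 * dv ee2 g y| := abs_add_le _ _
      _ = |v.1| * |dv ee1 g y| + |v.2| * |dv ee2 g y| := by rw [abs_mul, abs_mul]
      _ ≤ ‖v‖ * (K * ‖x‖ ^ j) + ‖v‖ * (K * ‖x‖ ^ j) := by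
          gcongr <;> [exact (h1.trans (by gcongr)); exact (h2.trans (by gcongr))]
      _ = 2 * K * ‖x‖ ^ j * ‖v‖ := by ring
  have hmvt := Convex.norm_image_sub_le_of_norm_fderiv_le
    (fun y hy => cdo_diffAt hU hg (hδU (hsub hy))) hC (convex_closedBall _ _)
    (mem_closedBall_self (norm_nonneg x)) (by simp [mem_closedBall, dist_zero_right] : x ∈ closedBall (0:E2) ‖x‖)
  rw [hg0] at hmvt
  simp only [sub_zero] at hmvt
  calc |g x| ≤ 2 * K * ‖x‖ ^ j * ‖x‖ := hmvt
    _ = 2 * K * ‖x‖ ^ (j + 1) := by rw [pow_succ]; ring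

lemma flat_bound (hU : IsOpen U) (hU0 : (0 : E2) ∈ U) {F : E2 → ℝ}
    (hF : ContDiffOn ℝ (⊤ : ℕ∞) F U)
    (hvan : ∀ i j : ℕ, i + j ≤ 4 → pD (i, j) F 0 = 0) :
    ∀ ε > 0, ∃ δ > 0, ∀ x : E2, ‖x‖ ≤ δ → |F x| ≤ ε * ‖x‖ ^ 4 := by
  intro ε hε
  have hε0 : 0 < ε / 16 := by positivity
  set ε0 := ε / 16 with hε0def
  set H : E2 → ℝ := fun y => |pD (4,0) F y| + |pD (3,1) F y| + |pD (2,2) F y|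
    + |pD (1,3) F y| + |pD (0,4) F y| with hH
  have hHc : ContinuousAt H 0 := by
    have c1 : ∀ α : ℕ × ℕ, ContinuousAt (pD α F) 0 :=
      fun α => ((smooth_pD hU hF α).continuousOn.continuousAt (hU.mem_nhds hU0))
    exact (((((c1 (4,0)).abs.add (c1 (3,1)).abs).add (c1 (2,2)).abs).add (c1 (1,3)).abs).add
      (c1 (0,4)).abs)
  have hH0 : H 0 = 0 := by
    simp [hH, hvan 4 0 (by norm_num), hvan 3 1 (by norm_num), hvan 2 2 (by norm_num),
      hvan 1 3 (by norm_num), hvan 0 4 (by norm_num)]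
  obtain ⟨r0, hr0, hball⟩ := Metric.isOpen_iff.1 hU 0 hU0
  obtain ⟨δ1, hδ1, hδ1b⟩ := Metric.continuousAt_iff.1 hHc ε0 hε0
  set δ := min (r0 / 2) (δ1 / 2) with hδdef
  have hδpos : 0 < δ := by positivity
  have hδU : closedBall (0 : E2) δ ⊆ U := by
    intro y hy
    apply hball
    have h1 : dist y 0 ≤ δ := hy
    have : δ < r0 := by
      have := min_le_left (r0 / 2) (δ1 / 2); simp only [← hδdef] at this; linarith
    exact lt_of_le_of_lt h1 this
  have hHb : ∀ y ∈ closedBall (0 : E2) δ, H y ≤ ε0 := by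
    intro y hy
    have h1 : dist y 0 ≤ δ := hy
    have h2 : δ < δ1 := by
      have := min_le_right (r0 / 2) (δ1 / 2); simp only [← hδdef] at this; linarith
    have := hδ1b (show dist y 0 < δ1 from lt_of_le_of_lt h1 h2)
    rw [hH0] at this
    have h3 : |H y| < ε0 := by simpa [Real.dist_eq] using this
    exact le_of_lt (lt_of_le_of_lt (le_abs_self _) h3)
  have h4b : ∀ i j : ℕ, i + j = 4 → ∀ y ∈ closedBall (0 : E2) δ, |pD (i, j) F y| ≤ ε0 := by
    intro i j hij y hy
    have hHy := hHb y hy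
    simp only [hH] at hHy
    have n0 := abs_nonneg (pD (4,0) F y); have n1 := abs_nonneg (pD (3,1) F y)
    have n2 := abs_nonneg (pD (2,2) F y); have n3 := abs_nonneg (pD (1,3) F y)
    have n4 := abs_nonneg (pD (0,4) F y)
    have hi : i ≤ 4 := by omega
    interval_cases i
    · obtain rfl : j = 4 := by omega
      linarith
    · obtain rfl : j = 3 := by omega
      linarith
    · obtain rfl : j = 2 := by omega
      linarith
    · obtain rfl : j = 1 := by omega
      linarith
    · obtain rfl : j = 0 := by omega
      linarith
  have h3b : ∀ i j : ℕ, i + j = 3 → ∀ x ∈ closedBall (0 : E2) δ,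
      |pD (i, j) F x| ≤ 2 * ε0 * ‖x‖ ^ 1 := by
    intro i j hij
    apply mvt_step hU (smooth_pD hU hF (i, j)) (le_of_lt hε0) hδU (hvan i j (by omega)) 0
    intro y hy
    constructor
    · rw [dv_e1_pD]
      simpa using h4b (i + 1) j (by omega) y hy
    · rw [dv_e2_pD hU hF i j y (hδU hy)]
      simpa using h4b i (j + 1) (by omega) y hy
  have h2b : ∀ i j : ℕ, i + j = 2 → ∀ x ∈ closedBall (0 : E2) δ,
      |pD (i, j) F x| ≤ 2 * (2 * ε0) * ‖x‖ ^ 2 := by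
    intro i j hij
    apply mvt_step hU (smooth_pD hU hF (i, j)) (by positivity) hδU (hvan i j (by omega)) 1
    intro y hy
    constructor
    · rw [dv_e1_pD]
      simpa using h3b (i + 1) j (by omega) y hy
    · rw [dv_e2_pD hU hF i j y (hδU hy)]
      simpa using h3b i (j + 1) (by omega) y hy
  have h1b : ∀ i j : ℕ, i + j = 1 → ∀ x ∈ closedBall (0 : E2) δ,
      |pD (i, j) F x| ≤ 2 * (2 * (2 * ε0)) * ‖x‖ ^ 3 := by
    intro i j hij
    apply mvt_step hU (smooth_pD hU hF (i, j)) (by positivity) hδU (hvan i j (by omega)) 2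
    intro y hy
    constructor
    · rw [dv_e1_pD]
      simpa using h2b (i + 1) j (by omega) y hy
    · rw [dv_e2_pD hU hF i j y (hδU hy)]
      simpa using h2b i (j + 1) (by omega) y hy
  have h0b : ∀ x ∈ closedBall (0 : E2) δ,
      |pD (0, 0) F x| ≤ 2 * (2 * (2 * (2 * ε0))) * ‖x‖ ^ 4 := by
    apply mvt_step hU (smooth_pD hU hF (0, 0)) (by positivity) hδU (hvan 0 0 (by omega)) 3
    intro y hy
    constructor
    · rw [dv_e1_pD]
      simpa using h1b 1 0 (by omega) y hy
    · rw [dv_e2_pD hU hF 0 0 y (hδU hy)]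
      simpa using h1b 0 1 (by omega) y hy
  refine ⟨δ, hδpos, fun x hx => ?_⟩
  have hmem : x ∈ closedBall (0 : E2) δ := by simpa [mem_closedBall, dist_zero_right] using hx
  have := h0b x hmem
  rw [pD00] at this
  calc |F x| ≤ 2 * (2 * (2 * (2 * ε0))) * ‖x‖ ^ 4 := this
    _ = ε * ‖x‖ ^ 4 := by rw [hε0def]; ring

lemma mono_step {u u' : ℝ → ℝ} {δ1 : ℝ}
    (hd : ∀ t : ℝ, |t| ≤ δ1 → HasDerivAt u (u' t) t) (h0 : u 0 = 0) (m : ℕ) (b : ℝ)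
    (hb : ∀ t : ℝ, 0 ≤ t → t ≤ δ1 → b * (m + 1) * t ^ m ≤ u' t) :
    ∀ t : ℝ, 0 ≤ t → t ≤ δ1 → b * t ^ (m + 1) ≤ u t := by
  intro t ht0 htδ
  have habs : ∀ s : ℝ, s ∈ Icc (0:ℝ) δ1 → |s| ≤ δ1 := by
    intro s hs; rw [abs_le]; exact ⟨by linarith [hs.1], hs.2⟩
  have hder : ∀ s ∈ Icc (0:ℝ) δ1, HasDerivAt (fun r => u r - b * r ^ (m + 1))
      (u' s - b * ((m + 1) * s ^ m)) s := by
    intro s hs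
    have h2 : HasDerivAt (fun r : ℝ => b * r ^ (m + 1)) (b * ((m + 1) * s ^ m)) s := by
      simpa using (hasDerivAt_pow (m + 1) s).const_mul b
    exact (hd s (habs s hs)).sub h2
  have hmono : MonotoneOn (fun r => u r - b * r ^ (m + 1)) (Icc (0:ℝ) δ1) := by
    apply monotoneOn_of_deriv_nonneg (convex_Icc 0 δ1)
    · intro s hs
      exact ((hder s hs).differentiableAt.continuousAt).continuousWithinAt
    · intro s hs
      rw [interior_Icc] at hs
      exact (hder s ⟨le_of_lt hs.1, le_of_lt hs.2⟩).differentiableAt.differentiableWithinAt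
    · intro s hs
      rw [interior_Icc] at hs
      rw [(hder s ⟨le_of_lt hs.1, le_of_lt hs.2⟩).deriv]
      have := hb s (le_of_lt hs.1) (le_of_lt hs.2)
      linarith
  have h01 : (0:ℝ) ∈ Icc (0:ℝ) δ1 := ⟨le_refl _, by linarith⟩
  have ht1 : t ∈ Icc (0:ℝ) δ1 := ⟨ht0, htδ⟩
  have := hmono h01 ht1 ht0
  simp only [h0] at this
  have hz : (0:ℝ) - b * 0 ^ (m + 1) ≤ u t - b * t ^ (m + 1) := by simpa using this
  have : b * (0:ℝ) ^ (m + 1) = 0 := by simp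
  linarith [hz]

lemma oneD_aux {ψ0 ψ1 ψ2 ψ3 ψ4 : ℝ → ℝ} {δ0 : ℝ} (hδ0 : 0 < δ0)
    (hd0 : ∀ t : ℝ, |t| ≤ δ0 → HasDerivAt ψ0 (ψ1 t) t)
    (hd1 : ∀ t : ℝ, |t| ≤ δ0 → HasDerivAt ψ1 (ψ2 t) t)
    (hd2 : ∀ t : ℝ, |t| ≤ δ0 → HasDerivAt ψ2 (ψ3 t) t)
    (hd3 : ∀ t : ℝ, |t| ≤ δ0 → HasDerivAt ψ3 (ψ4 t) t)
    (hcont : ContinuousAt ψ4 0)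
    (hz0 : ψ0 0 = 0) (hz1 : ψ1 0 = 0) (hz2 : ψ2 0 = 0) (hz3 : ψ3 0 = 0)
    (hsmall : ∀ ε > 0, ∃ δ > 0, ∀ t : ℝ, 0 < t → t ≤ δ → |ψ0 t| ≤ ε * t ^ 4)
    (hpos : 0 < ψ4 0) : False := by
  set a := ψ4 0 with ha
  obtain ⟨δ', hδ', hb'⟩ := Metric.continuousAt_iff.1 hcont (a / 2) (by positivity)
  set δ1 := min δ0 (δ' / 2) with hδ1def
  have hδ1pos : 0 < δ1 := by positivity
  have hδ1le : δ1 ≤ δ0 := min_le_left _ _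
  have hψ4 : ∀ t : ℝ, 0 ≤ t → t ≤ δ1 → a / 2 ≤ ψ4 t := by
    intro t ht0 htδ
    have h1 : dist t 0 < δ' := by
      rw [Real.dist_eq, sub_zero, abs_of_nonneg ht0]
      have : δ1 ≤ δ' / 2 := min_le_right _ _
      linarith
    have := hb' h1
    rw [Real.dist_eq] at this
    have := abs_lt.1 this
    linarith [this.1]
  have habs1 : ∀ t : ℝ, |t| ≤ δ1 → |t| ≤ δ0 := fun t ht => le_trans ht hδ1le
  have hs3 : ∀ t : ℝ, 0 ≤ t → t ≤ δ1 → a / 2 * t ^ (0 + 1) ≤ ψ3 t := by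
    apply mono_step (fun t ht => hd3 t (habs1 t ht)) hz3 0 (a / 2)
    intro t ht0 htδ
    have := hψ4 t ht0 htδ
    simpa using this
  have hs2 : ∀ t : ℝ, 0 ≤ t → t ≤ δ1 → a / 4 * t ^ (1 + 1) ≤ ψ2 t := by
    apply mono_step (fun t ht => hd2 t (habs1 t ht)) hz2 1 (a / 4)
    intro t ht0 htδ
    have := hs3 t ht0 htδ
    simp only [pow_one] at this ⊢
    nlinarith
  have hs1 : ∀ t : ℝ, 0 ≤ t → t ≤ δ1 → a / 12 * t ^ (2 + 1) ≤ ψ1 t := by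
    apply mono_step (fun t ht => hd1 t (habs1 t ht)) hz1 2 (a / 12)
    intro t ht0 htδ
    have := hs2 t ht0 htδ
    nlinarith
  have hs0 : ∀ t : ℝ, 0 ≤ t → t ≤ δ1 → a / 48 * t ^ (3 + 1) ≤ ψ0 t := by
    apply mono_step (fun t ht => hd0 t (habs1 t ht)) hz0 3 (a / 48)
    intro t ht0 htδ
    have := hs1 t ht0 htδ
    nlinarith
  obtain ⟨δ2, hδ2, hsm⟩ := hsmall (a / 96) (by positivity)
  set t0 := min δ1 δ2 with ht0def
  have ht0pos : 0 < t0 := by positivity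
  have h1 := hs0 t0 (le_of_lt ht0pos) (min_le_left _ _)
  have h2 := hsm t0 ht0pos (min_le_right _ _)
  have h3 : ψ0 t0 ≤ |ψ0 t0| := le_abs_self _
  have h4 : 0 < t0 ^ (3 + 1) := by positivity
  norm_num at h1 h4
  nlinarith [mul_pos hpos h4]

lemma oneD_main {ψ0 ψ1 ψ2 ψ3 ψ4 : ℝ → ℝ} {δ0 : ℝ} (hδ0 : 0 < δ0)
    (hd0 : ∀ t : ℝ, |t| ≤ δ0 → HasDerivAt ψ0 (ψ1 t) t)
    (hd1 : ∀ t : ℝ, |t| ≤ δ0 → HasDerivAt ψ1 (ψ2 t) t)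
    (hd2 : ∀ t : ℝ, |t| ≤ δ0 → HasDerivAt ψ2 (ψ3 t) t)
    (hd3 : ∀ t : ℝ, |t| ≤ δ0 → HasDerivAt ψ3 (ψ4 t) t)
    (hcont : ContinuousAt ψ4 0)
    (hz0 : ψ0 0 = 0) (hz1 : ψ1 0 = 0) (hz2 : ψ2 0 = 0) (hz3 : ψ3 0 = 0)
    (hsmall : ∀ ε > 0, ∃ δ > 0, ∀ t : ℝ, 0 < t → t ≤ δ → |ψ0 t| ≤ ε * t ^ 4) :
    ψ4 0 = 0 := by
  rcases lt_trichotomy (ψ4 0) 0 with h | h | h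
  · exfalso
    apply oneD_aux (ψ0 := fun t => -ψ0 t) (ψ1 := fun t => -ψ1 t) (ψ2 := fun t => -ψ2 t)
      (ψ3 := fun t => -ψ3 t) (ψ4 := fun t => -ψ4 t) hδ0
      (fun t ht => (hd0 t ht).neg) (fun t ht => (hd1 t ht).neg)
      (fun t ht => (hd2 t ht).neg) (fun t ht => (hd3 t ht).neg)
      hcont.neg (by simp [hz0]) (by simp [hz1]) (by simp [hz2]) (by simp [hz3])
    · intro ε hε
      obtain ⟨δ, hδ, hs⟩ := hsmall ε hε
      exact ⟨δ, hδ, fun t ht1 ht2 => by simpa using hs t ht1 ht2⟩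
    · simpa using h
  · exact h
  · exact absurd h (by
      intro h
      exact oneD_aux hδ0 hd0 hd1 hd2 hd3 hcont hz0 hz1 hz2 hz3 hsmall h)

lemma line_deriv (hU : IsOpen U) {g : E2 → ℝ} (hg : ContDiffOn ℝ (⊤ : ℕ∞) g U) (v : E2) :
    ∀ t : ℝ, t • v ∈ U → HasDerivAt (fun s : ℝ => g (s • v)) (dv v g (t • v)) t := by
  intro t ht
  have h1 : HasDerivAt (fun s : ℝ => s • v) v t := by
    simpa using (hasDerivAt_id t).smul_const v
  have h2 : DifferentiableAt ℝ g (t • v) := cdo_diffAt hU hg ht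
  have := h2.hasFDerivAt.comp_hasDerivAt t h1
  exact this

lemma mem_np_of_support {f : ℝ × ℝ → ℝ} {α : ℕ × ℕ} (hα : α ∈ taylorSupport f)
    (h1 : α.1 ≤ 4) (h2 : α.2 ≤ 4) : ((4 : ℝ), (4 : ℝ)) ∈ newtonPolygon f := by
  apply subset_convexHull
  apply mem_iUnion₂.mpr
  refine ⟨α, hα, ?_, ?_⟩ <;> simp <;> exact_mod_cast ‹_›

lemma newtonDist_le_four {f : ℝ × ℝ → ℝ}
    (h : ∃ α ∈ taylorSupport f, α.1 ≤ 4 ∧ α.2 ≤ 4) : newtonDist f ≤ 4 := by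
  obtain ⟨α, hα, h1, h2⟩ := h
  apply csInf_le
  · exact ⟨0, fun t ht => le_of_lt ht.1⟩
  · exact ⟨by norm_num, mem_np_of_support hα h1 h2⟩

lemma newtonDist_ge {f : ℝ × ℝ → ℝ}
    (hsub : ∀ α ∈ taylorSupport f, 15 ≤ 3 * α.1 + 4 * α.2)
    (hne : ∃ α ∈ taylorSupport f, α.1 ≤ 4 ∧ α.2 ≤ 4) : 15 / 7 ≤ newtonDist f := by
  have hNP : newtonPolygon f ⊆ {t : ℝ × ℝ | 15 ≤ 3 * t.1 + 4 * t.2} := by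
    apply convexHull_min
    · intro t ht
      obtain ⟨α, hα, ht1, ht2⟩ := mem_iUnion₂.mp ht
      have hn := hsub α hα
      have hc : (15 : ℝ) ≤ 3 * (α.1 : ℝ) + 4 * (α.2 : ℝ) := by exact_mod_cast hn
      simp only [mem_setOf_eq] at *
      nlinarith [ht1, ht2]
    · intro p hp q hq s t hs ht hst
      simp only [mem_setOf_eq] at *
      have e1 : (s • p + t • q).1 = s * p.1 + t * q.1 := rfl
      have e2 : (s • p + t • q).2 = s * p.2 + t * q.2 := rfl
      rw [e1, e2]
      nlinarith
  apply le_csInf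
  · obtain ⟨α, hα, h1, h2⟩ := hne
    exact ⟨4, by norm_num, mem_np_of_support hα h1 h2⟩
  · intro t ht
    have := hNP ht.2
    simp only [mem_setOf_eq] at this
    linarith

lemma homPart4_eq (f : ℝ × ℝ → ℝ) (x : ℝ × ℝ) :
    homPart f 4 x = pD (0, 4) f 0 / 24 * x.2 ^ 4 + pD (1, 3) f 0 / 6 * (x.1 * x.2 ^ 3)
      + pD (2, 2) f 0 / 4 * (x.1 ^ 2 * x.2 ^ 2) + pD (3, 1) f 0 / 6 * (x.1 ^ 3 * x.2)
      + pD (4, 0) f 0 / 24 * x.1 ^ 4 := by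
  rw [homPart, Finset.Nat.sum_antidiagonal_eq_sum_range_succ_mk]
  simp [Finset.sum_range_succ, Nat.factorial]
  norm_num
  ring

lemma trig_deriv (a0 a1 a2 a3 a4 : ℝ) (t : ℝ) :
    HasDerivAt (fun t => a0 * Real.cos t ^ 4 + a1 * (Real.cos t ^ 3 * Real.sin t)
        + a2 * (Real.cos t ^ 2 * Real.sin t ^ 2) + a3 * (Real.cos t * Real.sin t ^ 3)
        + a4 * Real.sin t ^ 4)
      (a1 * Real.cos t ^ 4 + (-4 * a0 + 2 * a2) * (Real.cos t ^ 3 * Real.sin t)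
        + (-3 * a1 + 3 * a3) * (Real.cos t ^ 2 * Real.sin t ^ 2)
        + (-2 * a2 + 4 * a4) * (Real.cos t * Real.sin t ^ 3)
        + (-a3) * Real.sin t ^ 4) t := by
  have hc := Real.hasDerivAt_cos t
  have hs := Real.hasDerivAt_sin t
  have H := (((((hc.pow 4).const_mul a0).add (((hc.pow 3).mul hs).const_mul a1)).add
    (((hc.pow 2).mul (hs.pow 2)).const_mul a2)).add ((hc.mul (hs.pow 3)).const_mul a3)).add
    ((hs.pow 4).const_mul a4)
  refine H.congr_deriv ?_
  have hpy := Real.sin_sq_add_cos_sq t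
  norm_num
  ring

lemma nmax_extract {P : ℝ × ℝ → ℝ} (h : 3 ≤ nmax P) :
    ∃ θ : ℝ, ∀ j : ℕ, j < 3 → iteratedDeriv j (fun t => P (Real.cos t, Real.sin t)) θ = 0 := by
  by_contra hc
  push_neg at hc
  have hb : ∀ θ : ℝ, circVanish P θ ≤ 2 := by
    intro θ
    obtain ⟨j0, hj0, hne⟩ := hc θ
    apply sSup_le
    intro k hk
    by_contra hk2
    have h2k : (2 : ℕ∞) < k := lt_of_not_ge hk2
    apply hne
    apply hk
    calc (j0 : ℕ∞) ≤ 2 := by exact_mod_cast Nat.lt_succ_iff.mp hj0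
      _ < k := h2k
  have : nmax P ≤ 2 := iSup_le hb
  have : (3 : ℕ∞) ≤ 2 := le_trans h this
  exact absurd this (by decide)

def rotL (c s : ℝ) : E2 →ₗ[ℝ] E2 where
  toFun := fun x => (c * x.1 - s * x.2, s * x.1 + c * x.2)
  map_add' := by intro a b; simp; constructor <;> ring
  map_smul' := by intro m a; simp; constructor <;> ring

def rotE (c s : ℝ) (h : c ^ 2 + s ^ 2 = 1) : E2 ≃ₗ[ℝ] E2 :=
  LinearEquiv.ofLinear (rotL c s) (rotL c (-s))
    (by
      apply LinearMap.ext
      intro x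
      simp [rotL]
      rw [Prod.ext_iff]
      constructor
      · linear_combination x.1 * h
      · linear_combination x.2 * h)
    (by
      apply LinearMap.ext
      intro x
      simp [rotL]
      rw [Prod.ext_iff]
      constructor
      · linear_combination x.1 * h
      · linear_combination x.2 * h)

lemma rotE_apply (c s : ℝ) (h : c ^ 2 + s ^ 2 = 1) (x : E2) :
    rotE c s h x = (c * x.1 - s * x.2, s * x.1 + c * x.2) := rfl

lemma rotE_symm_apply (c s : ℝ) (h : c ^ 2 + s ^ 2 = 1) (x : E2) :
    (rotE c s h).symm x = (c * x.1 + s * x.2, -s * x.1 + c * x.2) := by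
  show rotL c (-s) x = _
  simp [rotL]

lemma phi_flat_contra {ϕ : E2 → ℝ} (hU : IsOpen U) (hU0 : (0 : E2) ∈ U)
    (hϕ : ContDiffOn ℝ (⊤ : ℕ∞) ϕ U)
    (hrank : ∀ α : ℕ × ℕ, α.1 + α.2 ≤ 3 → pD α ϕ 0 = 0)
    (hsm : ∀ ε > 0, ∃ δ > 0, ∀ w : E2, ‖w‖ ≤ δ → |ϕ w| ≤ ε * ‖w‖ ^ 4) :
    homPart ϕ 4 = 0 := by
  have hq : ∀ v : E2, dv v (dv v (dv v (dv v ϕ))) 0 = 0 := by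
    intro v
    obtain ⟨r, hr, hball⟩ := Metric.isOpen_iff.1 hU 0 hU0
    have hv1 : 0 < ‖v‖ + 1 := by positivity
    set δ0 := r / (2 * (‖v‖ + 1)) with hδ0def
    have hδ0 : 0 < δ0 := by positivity
    have hmem : ∀ t : ℝ, |t| ≤ δ0 → t • v ∈ U := by
      intro t ht
      apply hball
      rw [mem_ball, dist_zero_right, norm_smul]
      have h1 : ‖v‖ < ‖v‖ + 1 := by linarith
      have h2 : ‖t‖ * ‖v‖ ≤ δ0 * (‖v‖ + 1) := by
        apply mul_le_mul _ (le_of_lt h1) (norm_nonneg v) (le_of_lt hδ0)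
        rwa [Real.norm_eq_abs]
      have h3 : δ0 * (‖v‖ + 1) = r / 2 := by rw [hδ0def]; field_simp
      rw [h3] at h2
      linarith
    set G : ℕ → E2 → ℝ := fun k => (dv v)^[k] ϕ with hG
    have hGs : ∀ k, ContDiffOn ℝ (⊤ : ℕ∞) (G k) U := fun k => smooth_dv_iter hU v k hϕ
    have hd : ∀ k, ∀ t : ℝ, |t| ≤ δ0 →
        HasDerivAt (fun s => G k (s • v)) (G (k + 1) (t • v)) t := by
      intro k t ht
      have h := line_deriv hU (hGs k) v t (hmem t ht)
      rwa [show dv v (G k) = G (k + 1) from (Function.iterate_succ_apply' (dv v) k ϕ).symm] at h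
    have h0U : (0 : ℝ) • v ∈ U := by rw [zero_smul]; exact hU0
    have hcont : ContinuousAt (fun t : ℝ => G 4 (t • v)) 0 := by
      have hc1 : ContinuousAt (G 4) ((0 : ℝ) • v) :=
        (hGs 4).continuousOn.continuousAt (hU.mem_nhds h0U)
      have hc2 : ContinuousAt (fun t : ℝ => t • v) 0 := by fun_prop
      exact ContinuousAt.comp hc1 hc2
    have hz : ∀ k, k ≤ 3 → G k ((0 : ℝ) • v) = 0 := by
      intro k hk
      rw [zero_smul]
      interval_cases k
      · exact hrank (0, 0) (by norm_num)
      · show dv v ϕ 0 = 0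
        rw [ddE1 hU hϕ hU0 v, hrank (1, 0) (by norm_num), hrank (0, 1) (by norm_num)]
        ring
      · show dv v (dv v ϕ) 0 = 0
        rw [ddE2 hU hϕ 0 hU0 v v, hrank (2, 0) (by norm_num), hrank (1, 1) (by norm_num),
          hrank (0, 2) (by norm_num)]
        ring
      · show dv v (dv v (dv v ϕ)) 0 = 0
        rw [ddE3 hU hϕ 0 hU0 v v v, hrank (3, 0) (by norm_num), hrank (2, 1) (by norm_num),
          hrank (1, 2) (by norm_num), hrank (0, 3) (by norm_num)]
        ring
    have hsm' : ∀ ε > 0, ∃ δ > 0, ∀ t : ℝ, 0 < t → t ≤ δ →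
        |(fun s : ℝ => G 0 (s • v)) t| ≤ ε * t ^ 4 := by
      intro ε hε
      obtain ⟨δ', hδ', hb⟩ := hsm (ε / (‖v‖ + 1) ^ 4) (by positivity)
      refine ⟨δ' / (‖v‖ + 1), by positivity, fun t ht1 ht2 => ?_⟩
      have hn : ‖t • v‖ ≤ δ' := by
        rw [norm_smul]
        have : ‖t‖ * ‖v‖ ≤ (δ' / (‖v‖ + 1)) * (‖v‖ + 1) := by
          apply mul_le_mul _ (by linarith) (norm_nonneg v) (by positivity)
          rwa [Real.norm_eq_abs, abs_of_pos ht1]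
        calc ‖t‖ * ‖v‖ ≤ (δ' / (‖v‖ + 1)) * (‖v‖ + 1) := this
          _ = δ' := by field_simp
      have hb' := hb (t • v) hn
      have hr1 : ‖v‖ ^ 4 ≤ (‖v‖ + 1) ^ 4 := by
        apply pow_le_pow_left₀ (norm_nonneg v) (by linarith)
      have hp : (0 : ℝ) < (‖v‖ + 1) ^ 4 := by positivity
      calc |(fun s : ℝ => G 0 (s • v)) t| = |ϕ (t • v)| := rfl
        _ ≤ ε / (‖v‖ + 1) ^ 4 * ‖t • v‖ ^ 4 := hb'
        _ = ε / (‖v‖ + 1) ^ 4 * (t ^ 4 * ‖v‖ ^ 4) := by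
            rw [norm_smul, Real.norm_eq_abs, abs_of_pos ht1, mul_pow]
        _ ≤ ε / (‖v‖ + 1) ^ 4 * (t ^ 4 * (‖v‖ + 1) ^ 4) := by
            gcongr
        _ = ε * t ^ 4 := by field_simp
    have hmain := oneD_main hδ0 (hd 0) (hd 1) (hd 2) (hd 3) hcont
      (hz 0 (by norm_num)) (hz 1 (by norm_num)) (hz 2 (by norm_num)) (hz 3 (by norm_num)) hsm'
    have : G 4 ((0 : ℝ) • v) = 0 := hmain
    rw [zero_smul] at this
    exact this
  have hE : ∀ r : ℝ, pD (4, 0) ϕ 0 + 4 * r * pD (3, 1) ϕ 0 + 6 * r ^ 2 * pD (2, 2) ϕ 0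
      + 4 * r ^ 3 * pD (1, 3) ϕ 0 + r ^ 4 * pD (0, 4) ϕ 0 = 0 := by
    intro r
    have h := hq (1, r)
    rw [ddE4 hU hϕ 0 hU0 (1, r) (1, r) (1, r) (1, r)] at h
    simp only at h
    linear_combination h
  have e0 := hE 0
  have e1 := hE 1
  have e2 := hE (-1)
  have e3 := hE 2
  have e4 := hE (-2)
  norm_num at e0 e1 e2 e3 e4
  have s40 : pD (4, 0) ϕ 0 = 0 := by linarith
  have s22 : pD (2, 2) ϕ 0 = 0 := by linarith
  have s04 : pD (0, 4) ϕ 0 = 0 := by linarith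
  have s31 : pD (3, 1) ϕ 0 = 0 := by linarith
  have s13 : pD (1, 3) ϕ 0 = 0 := by linarith
  funext x
  rw [show (0 : E2 → ℝ) x = 0 from rfl, homPart4_eq, s40, s31, s22, s13, s04]
  ring

lemma coord_support {ϕ : E2 → ℝ} (hU : IsOpen U) (hU0 : (0 : E2) ∈ U)
    (hϕ : ContDiffOn ℝ (⊤ : ℕ∞) ϕ U)
    (hrank : ∀ α : ℕ × ℕ, α.1 + α.2 ≤ 3 → pD α ϕ 0 = 0)
    (h4 : homPart ϕ 4 ≠ 0) :
    ∀ y : E2 → E2, IsLocalCoordChange y →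
      ∃ α ∈ taylorSupport (ϕ ∘ y), α.1 ≤ 4 ∧ α.2 ≤ 4 := by
  intro y hy
  obtain ⟨hy0, Uy, V, hUy, hV, h0Uy, h0V, hys, hymaps, z, hzs, hzmaps, hzy, hyz⟩ := hy
  by_contra hno
  push_neg at hno
  apply h4
  set W := Uy ∩ y ⁻¹' U with hW
  have hWo : IsOpen W := (hys.continuousOn).isOpen_inter_preimage hUy hU
  have hW0 : (0 : E2) ∈ W := ⟨h0Uy, by simp only [mem_preimage, hy0]; exact hU0⟩
  have hFs : ContDiffOn ℝ (⊤ : ℕ∞) (ϕ ∘ y) W :=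
    hϕ.comp (hys.mono inter_subset_left) (fun x hx => hx.2)
  have hvan : ∀ i j : ℕ, i + j ≤ 4 → pD (i, j) (ϕ ∘ y) 0 = 0 := by
    intro i j hij
    by_cases h0 : (i, j) = ((0 : ℕ), (0 : ℕ))
    · rw [h0]
      show ϕ (y 0) = 0
      rw [hy0]
      exact hrank (0, 0) (by norm_num)
    · by_contra hne
      have hTS : ((i, j) : ℕ × ℕ) ∈ taylorSupport (ϕ ∘ y) := ⟨by simpa using h0, hne⟩
      have h5 := hno (i, j) hTS
      simp only at h5
      have h6 : i ≤ 4 := by omega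
      have := h5 h6
      omega
  have hFb := flat_bound hWo hW0 hFs hvan
  have hz0 : z 0 = 0 := by
    have h := hzy 0 h0Uy
    rwa [hy0] at h
  have hzd : DifferentiableAt ℝ z 0 :=
    ((hzs.differentiableOn (by simp)).differentiableAt (hV.mem_nhds h0V))
  have hbig := hzd.isBigO_sub
  rw [Asymptotics.isBigO_iff] at hbig
  obtain ⟨C, hC⟩ := hbig
  set C' := max C 1 with hC'def
  have hC'1 : (1 : ℝ) ≤ C' := le_max_right _ _
  have hC'0 : (0 : ℝ) < C' := lt_of_lt_of_le one_pos hC'1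
  have hev : ∀ᶠ w in nhds (0 : E2), w ∈ V ∧ ‖z w‖ ≤ C' * ‖w‖ := by
    filter_upwards [hC, hV.mem_nhds h0V] with w h1 h2
    refine ⟨h2, ?_⟩
    rw [hz0, sub_zero, sub_zero] at h1
    calc ‖z w‖ ≤ C * ‖w‖ := h1
      _ ≤ C' * ‖w‖ := mul_le_mul_of_nonneg_right (le_max_left _ _) (norm_nonneg w)
  obtain ⟨δv, hδv, hball⟩ := Metric.eventually_nhds_iff_ball.1 hev
  have hφsm : ∀ ε > 0, ∃ δ > 0, ∀ w : E2, ‖w‖ ≤ δ → |ϕ w| ≤ ε * ‖w‖ ^ 4 := by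
    intro ε hε
    obtain ⟨δF, hδF, hFbd⟩ := hFb (ε / C' ^ 4) (by positivity)
    refine ⟨min (δv / 2) (δF / C'), by positivity, fun w hw => ?_⟩
    have hw1 : ‖w‖ < δv := by
      have := hw.trans (min_le_left _ _)
      linarith
    obtain ⟨hwV, hwz⟩ := hball w (by rwa [mem_ball, dist_zero_right])
    have hϕw : ϕ w = (ϕ ∘ y) (z w) := by
      simp only [Function.comp_apply]
      rw [hyz w hwV]
    have hzw : ‖z w‖ ≤ δF := by
      calc ‖z w‖ ≤ C' * ‖w‖ := hwz
        _ ≤ C' * (δF / C') := by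
            apply mul_le_mul_of_nonneg_left (hw.trans (min_le_right _ _)) (le_of_lt hC'0)
        _ = δF := by field_simp
    have hnn : ‖z w‖ ≤ C' * ‖w‖ := hwz
    calc |ϕ w| = |(ϕ ∘ y) (z w)| := by rw [hϕw]
      _ ≤ ε / C' ^ 4 * ‖z w‖ ^ 4 := hFbd (z w) hzw
      _ ≤ ε / C' ^ 4 * (C' * ‖w‖) ^ 4 := by
          gcongr
      _ = ε * ‖w‖ ^ 4 := by field_simp
  exact phi_flat_contra hU hU0 hϕ hrank hφsm

lemma contDiffL (L : E2 ≃ₗ[ℝ] E2) : ContDiff ℝ (⊤ : ℕ∞) ⇑L := by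
  have := (L.toContinuousLinearEquiv : E2 →L[ℝ] E2).contDiff (n := ((⊤ : ℕ∞) : WithTop ℕ∞))
  simpa using this

lemma linear_coordchange (L : E2 ≃ₗ[ℝ] E2) : IsLocalCoordChange ⇑L :=
  ⟨map_zero L, univ, univ, isOpen_univ, isOpen_univ, mem_univ _, mem_univ _,
   (contDiffL L).contDiffOn, mapsTo_univ _ _, ⇑L.symm, (contDiffL L.symm).contDiffOn,
   mapsTo_univ _ _, fun x _ => L.symm_apply_apply x, fun x _ => L.apply_symm_apply x⟩

lemma main_core {ϕ : E2 → ℝ} (hU : IsOpen U) (hU0 : (0 : E2) ∈ U)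
    (hϕ : ContDiffOn ℝ (⊤ : ℕ∞) ϕ U)
    (hrank : ∀ α : ℕ × ℕ, α.1 + α.2 ≤ 3 → pD α ϕ 0 = 0)
    (h4 : homPart ϕ 4 ≠ 0) (hn4 : 3 ≤ nmax (homPart ϕ 4)) :
    ∃ L : E2 ≃ₗ[ℝ] E2, 15 / 7 ≤ newtonDist (ϕ ∘ ⇑L) := by
  obtain ⟨θ, hθ⟩ := nmax_extract hn4
  set a0 := pD (4, 0) ϕ 0 / 24 with ha0
  set a1 := pD (3, 1) ϕ 0 / 6 with ha1
  set a2 := pD (2, 2) ϕ 0 / 4 with ha2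
  set a3 := pD (1, 3) ϕ 0 / 6 with ha3
  set a4 := pD (0, 4) ϕ 0 / 24 with ha4
  have hgfun : (fun t => homPart ϕ 4 (Real.cos t, Real.sin t))
      = (fun t => a0 * Real.cos t ^ 4 + a1 * (Real.cos t ^ 3 * Real.sin t)
        + a2 * (Real.cos t ^ 2 * Real.sin t ^ 2) + a3 * (Real.cos t * Real.sin t ^ 3)
        + a4 * Real.sin t ^ 4) := by
    funext t
    rw [homPart4_eq]
    ring
  have hg0 : a0 * Real.cos θ ^ 4 + a1 * (Real.cos θ ^ 3 * Real.sin θ)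
      + a2 * (Real.cos θ ^ 2 * Real.sin θ ^ 2) + a3 * (Real.cos θ * Real.sin θ ^ 3)
      + a4 * Real.sin θ ^ 4 = 0 := by
    have h := hθ 0 (by norm_num)
    rw [iteratedDeriv_zero] at h
    rw [← congrFun hgfun θ]
    exact h
  have hg1 : a1 * Real.cos θ ^ 4 + (-4 * a0 + 2 * a2) * (Real.cos θ ^ 3 * Real.sin θ)
      + (-3 * a1 + 3 * a3) * (Real.cos θ ^ 2 * Real.sin θ ^ 2)
      + (-2 * a2 + 4 * a4) * (Real.cos θ * Real.sin θ ^ 3)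
      + (-a3) * Real.sin θ ^ 4 = 0 := by
    have h := hθ 1 (by norm_num)
    rw [iteratedDeriv_one, hgfun] at h
    rw [← (trig_deriv a0 a1 a2 a3 a4 θ).deriv]
    exact h
  have hd1fun : (deriv (fun t => a0 * Real.cos t ^ 4 + a1 * (Real.cos t ^ 3 * Real.sin t)
        + a2 * (Real.cos t ^ 2 * Real.sin t ^ 2) + a3 * (Real.cos t * Real.sin t ^ 3)
        + a4 * Real.sin t ^ 4))
      = (fun t => a1 * Real.cos t ^ 4 + (-4 * a0 + 2 * a2) * (Real.cos t ^ 3 * Real.sin t)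
        + (-3 * a1 + 3 * a3) * (Real.cos t ^ 2 * Real.sin t ^ 2)
        + (-2 * a2 + 4 * a4) * (Real.cos t * Real.sin t ^ 3)
        + (-a3) * Real.sin t ^ 4) := by
    funext t
    exact (trig_deriv a0 a1 a2 a3 a4 t).deriv
  have hg2 : (-4 * a0 + 2 * a2) * Real.cos θ ^ 4
      + (-4 * a1 + 2 * (-3 * a1 + 3 * a3)) * (Real.cos θ ^ 3 * Real.sin θ)
      + (-3 * (-4 * a0 + 2 * a2) + 3 * (-2 * a2 + 4 * a4)) * (Real.cos θ ^ 2 * Real.sin θ ^ 2)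
      + (-2 * (-3 * a1 + 3 * a3) + 4 * (-a3)) * (Real.cos θ * Real.sin θ ^ 3)
      + (-(-2 * a2 + 4 * a4)) * Real.sin θ ^ 4 = 0 := by
    have h := hθ 2 (by norm_num)
    rw [iteratedDeriv_succ, iteratedDeriv_one, hgfun, hd1fun] at h
    rw [← (trig_deriv a1 (-4 * a0 + 2 * a2) (-3 * a1 + 3 * a3) (-2 * a2 + 4 * a4) (-a3) θ).deriv]
    exact h
  have hcs : Real.cos θ ^ 2 + Real.sin θ ^ 2 = 1 := Real.cos_sq_add_sin_sq θ
  set c := Real.cos θ with hcdef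
  set s := Real.sin θ with hsdef
  set R := rotE c s hcs with hRdef
  have hA1 : (R ee1).1 = c := by rw [hRdef, rotE_apply]; norm_num [ee1]
  have hA2 : (R ee1).2 = s := by rw [hRdef, rotE_apply]; norm_num [ee1]
  have hB1 : (R ee2).1 = -s := by rw [hRdef, rotE_apply]; norm_num [ee2]
  have hB2 : (R ee2).2 = c := by rw [hRdef, rotE_apply]; norm_num [ee2]
  have hC1 : (R.symm ee1).1 = c := by rw [hRdef, rotE_symm_apply]; norm_num [ee1]
  have hC2 : (R.symm ee1).2 = -s := by rw [hRdef, rotE_symm_apply]; norm_num [ee1]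
  have hD1 : (R.symm ee2).1 = s := by rw [hRdef, rotE_symm_apply]; norm_num [ee2]
  have hD2 : (R.symm ee2).2 = c := by rw [hRdef, rotE_symm_apply]; norm_num [ee2]
  have hR0U : R 0 ∈ U := by rw [map_zero]; exact hU0
  -- order 1
  have hv10 : pD (1, 0) (ϕ ∘ ⇑R) 0 = 0 := by
    show dv ee1 (ϕ ∘ ⇑R) 0 = 0
    rw [comp1 R hU hϕ 0 hR0U ee1, map_zero, ddE1 hU hϕ hU0 (R ee1),
      hrank (1, 0) (by norm_num), hrank (0, 1) (by norm_num)]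
    ring
  have hv01 : pD (0, 1) (ϕ ∘ ⇑R) 0 = 0 := by
    show dv ee2 (ϕ ∘ ⇑R) 0 = 0
    rw [comp1 R hU hϕ 0 hR0U ee2, map_zero, ddE1 hU hϕ hU0 (R ee2),
      hrank (1, 0) (by norm_num), hrank (0, 1) (by norm_num)]
    ring
  -- order 2
  have hv2 : ∀ v w : E2, dv v (dv w (ϕ ∘ ⇑R)) 0 = 0 := by
    intro v w
    rw [comp2 R hU hϕ 0 hR0U v w, map_zero, ddE2 hU hϕ 0 hU0 (R v) (R w),
      hrank (2, 0) (by norm_num), hrank (1, 1) (by norm_num), hrank (0, 2) (by norm_num)]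
    ring
  have hv20 : pD (2, 0) (ϕ ∘ ⇑R) 0 = 0 := hv2 ee1 ee1
  have hv11 : pD (1, 1) (ϕ ∘ ⇑R) 0 = 0 := hv2 ee1 ee2
  have hv02 : pD (0, 2) (ϕ ∘ ⇑R) 0 = 0 := hv2 ee2 ee2
  -- order 3
  have hv3 : ∀ v w u : E2, dv v (dv w (dv u (ϕ ∘ ⇑R))) 0 = 0 := by
    intro v w u
    rw [comp3 R hU hϕ 0 hR0U v w u, map_zero, ddE3 hU hϕ 0 hU0 (R v) (R w) (R u),
      hrank (3, 0) (by norm_num), hrank (2, 1) (by norm_num), hrank (1, 2) (by norm_num),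
      hrank (0, 3) (by norm_num)]
    ring
  have hv30 : pD (3, 0) (ϕ ∘ ⇑R) 0 = 0 := hv3 ee1 ee1 ee1
  have hv21 : pD (2, 1) (ϕ ∘ ⇑R) 0 = 0 := hv3 ee1 ee1 ee2
  have hv12 : pD (1, 2) (ϕ ∘ ⇑R) 0 = 0 := hv3 ee1 ee2 ee2
  have hv03 : pD (0, 3) (ϕ ∘ ⇑R) 0 = 0 := hv3 ee2 ee2 ee2
  -- order 4
  have hv40 : pD (4, 0) (ϕ ∘ ⇑R) 0 = 0 := by
    show dv ee1 (dv ee1 (dv ee1 (dv ee1 (ϕ ∘ ⇑R)))) 0 = 0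
    rw [comp4 R hU hϕ 0 hR0U ee1 ee1 ee1 ee1, map_zero,
      ddE4 hU hϕ 0 hU0 (R ee1) (R ee1) (R ee1) (R ee1), hA1, hA2]
    rw [ha0, ha1, ha2, ha3, ha4] at hg0
    linear_combination 24 * hg0
  have hv31 : pD (3, 1) (ϕ ∘ ⇑R) 0 = 0 := by
    show dv ee1 (dv ee1 (dv ee1 (dv ee2 (ϕ ∘ ⇑R)))) 0 = 0
    rw [comp4 R hU hϕ 0 hR0U ee1 ee1 ee1 ee2, map_zero,
      ddE4 hU hϕ 0 hU0 (R ee1) (R ee1) (R ee1) (R ee2), hA1, hA2, hB1, hB2]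
    rw [ha0, ha1, ha2, ha3, ha4] at hg1
    linear_combination 6 * hg1
  have hv22 : pD (2, 2) (ϕ ∘ ⇑R) 0 = 0 := by
    show dv ee1 (dv ee1 (dv ee2 (dv ee2 (ϕ ∘ ⇑R)))) 0 = 0
    rw [comp4 R hU hϕ 0 hR0U ee1 ee1 ee2 ee2, map_zero,
      ddE4 hU hϕ 0 hU0 (R ee1) (R ee1) (R ee2) (R ee2), hA1, hA2, hB1, hB2]
    rw [ha0, ha1, ha2, ha3, ha4] at hg2 hg0
    linear_combination 2 * hg2 + 8 * hg0
  -- the dichotomy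
  have hUψo : IsOpen (⇑R ⁻¹' U) := hU.preimage (contL R)
  have hUψ0 : (0 : E2) ∈ ⇑R ⁻¹' U := by
    simp only [mem_preimage, map_zero]; exact hU0
  have hψs : ContDiffOn ℝ (⊤ : ℕ∞) (ϕ ∘ ⇑R) (⇑R ⁻¹' U) :=
    hϕ.comp ((contDiffL R).contDiffOn) (fun x hx => hx)
  have hglob : ϕ = (ϕ ∘ ⇑R) ∘ ⇑R.symm := by
    funext x
    simp only [Function.comp_apply, LinearEquiv.apply_symm_apply]
  have hsymm0 : R.symm 0 ∈ ⇑R ⁻¹' U := by rw [map_zero]; exact hUψ0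
  have hcontra : ¬ (pD (1, 3) (ϕ ∘ ⇑R) 0 = 0 ∧ pD (0, 4) (ϕ ∘ ⇑R) 0 = 0) := by
    rintro ⟨h13, h04⟩
    apply h4
    have hback : ∀ v w u q : E2, dv v (dv w (dv u (dv q ((ϕ ∘ ⇑R) ∘ ⇑R.symm)))) 0 = 0 := by
      intro v w u q
      rw [comp4 R.symm hUψo hψs 0 hsymm0 v w u q, map_zero,
        ddE4 hUψo hψs 0 hUψ0 (R.symm v) (R.symm w) (R.symm u) (R.symm q)]
      have e40 : pD (4, 0) (ϕ ∘ ⇑R) 0 = 0 := hv40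
      rw [hv40, hv31, hv22, h13, h04]
      ring
    have hS : ∀ v w u q : E2, dv v (dv w (dv u (dv q ϕ))) 0 = 0 := by
      intro v w u q
      rw [hglob]
      exact hback v w u q
    have s40 : pD (4, 0) ϕ 0 = 0 := hS ee1 ee1 ee1 ee1
    have s31 : pD (3, 1) ϕ 0 = 0 := hS ee1 ee1 ee1 ee2
    have s22 : pD (2, 2) ϕ 0 = 0 := hS ee1 ee1 ee2 ee2
    have s13 : pD (1, 3) ϕ 0 = 0 := hS ee1 ee2 ee2 ee2
    have s04 : pD (0, 4) ϕ 0 = 0 := hS ee2 ee2 ee2 ee2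
    funext x
    rw [show (0 : E2 → ℝ) x = 0 from rfl, homPart4_eq, s40, s31, s22, s13, s04]
    ring
  -- Newton polygon facts
  have hsub : ∀ α ∈ taylorSupport (ϕ ∘ ⇑R), 15 ≤ 3 * α.1 + 4 * α.2 := by
    rintro ⟨i, j⟩ ⟨hα0, hαne⟩
    by_contra hlt
    push_neg at hlt
    have hi : i ≤ 4 := by omega
    have hj : j ≤ 3 := by omega
    interval_cases i <;> interval_cases j <;>
      first
        | exact absurd rfl hα0
        | exact hαne hv10 | exact hαne hv01 | exact hαne hv20 | exact hαne hv11
        | exact hαne hv02 | exact hαne hv30 | exact hαne hv21 | exact hαne hv12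
        | exact hαne hv03 | exact hαne hv40 | exact hαne hv31 | exact hαne hv22
        | omega
  have hne : ∃ α ∈ taylorSupport (ϕ ∘ ⇑R), α.1 ≤ 4 ∧ α.2 ≤ 4 := by
    rcases not_and_or.1 hcontra with h | h
    · exact ⟨(1, 3), ⟨by norm_num, h⟩, by norm_num, by norm_num⟩
    · exact ⟨(0, 4), ⟨by norm_num, h⟩, by norm_num, by norm_num⟩
  exact ⟨R, newtonDist_ge hsub hne⟩

/-- if all derivatives of `ϕ` of order `≤ 3` vanish at `0`, `ϕ₄ ≢ 0` and
`𝔫(ϕ₄) ≥ 3`, then `h_lin(ϕ) > 2`, hence `h(ϕ) > 2`. -/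
theorem stmt18 (ϕ : ℝ × ℝ → ℝ) (hsm : ∃ U ∈ 𝓝 (0 : ℝ × ℝ), ContDiffOn ℝ (⊤ : ℕ∞) ϕ U)
    (hrank : ∀ α : ℕ × ℕ, α.1 + α.2 ≤ 3 → pD α ϕ 0 = 0)
    (h4 : homPart ϕ 4 ≠ 0) (hn4 : 3 ≤ nmax (homPart ϕ 4)) :
    2 < linHeight ϕ ∧ 2 < height ϕ := by
  obtain ⟨U0, hU0n, hϕ0⟩ := hsm
  obtain ⟨U, hUsub, hUo, hU0⟩ := _root_.mem_nhds_iff.1 hU0n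
  have hϕ : ContDiffOn ℝ (⊤ : ℕ∞) ϕ U := hϕ0.mono hUsub
  obtain ⟨R, hR⟩ := main_core hUo hU0 hϕ hrank h4 hn4
  have hbound : ∀ y : E2 → E2, IsLocalCoordChange y → newtonDist (ϕ ∘ y) ≤ 4 :=
    fun y hy => newtonDist_le_four (coord_support hUo hU0 hϕ hrank h4 y hy)
  constructor
  · have hbdd : BddAbove {d : ℝ | ∃ L : (ℝ × ℝ) ≃ₗ[ℝ] ℝ × ℝ, d = newtonDist (ϕ ∘ L)} := by
      refine ⟨4, ?_⟩
      rintro d ⟨L, rfl⟩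
      exact hbound ⇑L (linear_coordchange L)
    have hmem : newtonDist (ϕ ∘ ⇑R) ∈
        {d : ℝ | ∃ L : (ℝ × ℝ) ≃ₗ[ℝ] ℝ × ℝ, d = newtonDist (ϕ ∘ L)} := ⟨R, rfl⟩
    have hle := le_csSup hbdd hmem
    have : (2 : ℝ) < 15 / 7 := by norm_num
    calc (2 : ℝ) < 15 / 7 := this
      _ ≤ newtonDist (ϕ ∘ ⇑R) := hR
      _ ≤ linHeight ϕ := hle
  · have hbdd : BddAbove {d : ℝ | ∃ y : ℝ × ℝ → ℝ × ℝ,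
        IsLocalCoordChange y ∧ d = newtonDist (ϕ ∘ y)} := by
      refine ⟨4, ?_⟩
      rintro d ⟨y, hy, rfl⟩
      exact hbound y hy
    have hmem : newtonDist (ϕ ∘ ⇑R) ∈ {d : ℝ | ∃ y : ℝ × ℝ → ℝ × ℝ,
        IsLocalCoordChange y ∧ d = newtonDist (ϕ ∘ y)} := ⟨⇑R, linear_coordchange R, rfl⟩
    have hle := le_csSup hbdd hmem
    calc (2 : ℝ) < 15 / 7 := by norm_num
      _ ≤ newtonDist (ϕ ∘ ⇑R) := hR
      _ ≤ height ϕ := hle
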